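/- Soundness of the algorithmic type equality: if the algorithmic judgment V ; C ; · ⊢ A ≡ B is derivable (with empty closure context), then the declarative judgment ∀V. C ⇒ A ≡ B holds, i.e., for every ground substitution σ : V of natural numbers with C[σ] true, A[σ] ≡ B[σ]. -/

import Mathlib

/-! Arithmetic expressions and Presburger propositions over natural numbers,
with de Bruijn index variables. -/

inductive AExp : Type
  | const : ℕ → AExp
  | var : ℕ → AExp
  | add : AExp → AExp → AExp
  | sub : AExp → AExp → AExp
  | mul : ℕ → AExp → AExp
deriving DecidableEq

namespace AExp

def eval (σ : ℕ → ℕ) : AExp → ℕ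
  | const n => n
  | var n => σ n
  | add a b => a.eval σ + b.eval σ
  | sub a b => a.eval σ - b.eval σ
  | mul k a => k * a.eval σ

def subst (τ : ℕ → AExp) : AExp → AExp
  | const n => const n
  | var n => τ n
  | add a b => add (a.subst τ) (b.subst τ)
  | sub a b => sub (a.subst τ) (b.subst τ)
  | mul k a => mul k (a.subst τ)

def hasVar : AExp → Bool
  | const _ => false
  | var _ => true
  | add a b => a.hasVar || b.hasVar
  | sub a b => a.hasVar || b.hasVar
  | mul _ a => a.hasVar

/-- Normalization: a closed arithmetic expression is replaced by its value. -/
def norm (e : AExp) : AExp := if e.hasVar then e else .const (e.eval (fun _ => 0))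

/-- Substitution followed by normalization of closed expressions to their values. -/
def substN (τ : ℕ → AExp) (e : AExp) : AExp := (e.subst τ).norm

/-- All variables of `e` are `< k`. -/
def ClosedAt (k : ℕ) : AExp → Prop
  | const _ => True
  | var n => n < k
  | add a b => a.ClosedAt k ∧ b.ClosedAt k
  | sub a b => a.ClosedAt k ∧ b.ClosedAt k
  | mul _ a => a.ClosedAt k

end AExp

/-- Cons for substitutions/assignments. -/
def scons {α : Type*} (i : α) (σ : ℕ → α) : ℕ → α
  | 0 => i
  | n + 1 => σ n

/-- Lifting a substitution under a binder. -/
def liftτ (τ : ℕ → AExp) : ℕ → AExp :=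
  scons (AExp.var 0) (fun n => (τ n).subst (fun k => AExp.var (k + 1)))

inductive AProp : Type
  | aeq : AExp → AExp → AProp
  | agt : AExp → AExp → AProp
  | tt : AProp
  | ff : AProp
  | conj : AProp → AProp → AProp
  | disj : AProp → AProp → AProp
  | neg : AProp → AProp
  | aexists : AProp → AProp
  | aforall : AProp → AProp

namespace AProp

def holds (σ : ℕ → ℕ) : AProp → Prop
  | aeq a b => a.eval σ = b.eval σ
  | agt a b => b.eval σ < a.eval σ
  | tt => True
  | ff => False
  | conj φ ψ => φ.holds σ ∧ ψ.holds σ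
  | disj φ ψ => φ.holds σ ∨ ψ.holds σ
  | neg φ => ¬ φ.holds σ
  | aexists φ => ∃ i : ℕ, φ.holds (scons i σ)
  | aforall φ => ∀ i : ℕ, φ.holds (scons i σ)

def subst (τ : ℕ → AExp) : AProp → AProp
  | aeq a b => aeq (a.subst τ) (b.subst τ)
  | agt a b => agt (a.subst τ) (b.subst τ)
  | tt => tt
  | ff => ff
  | conj φ ψ => conj (φ.subst τ) (ψ.subst τ)
  | disj φ ψ => disj (φ.subst τ) (ψ.subst τ)
  | neg φ => neg (φ.subst τ)
  | aexists φ => aexists (φ.subst (liftτ τ))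
  | aforall φ => aforall (φ.subst (liftτ τ))

def ClosedAt (k : ℕ) : AProp → Prop
  | aeq a b => a.ClosedAt k ∧ b.ClosedAt k
  | agt a b => a.ClosedAt k ∧ b.ClosedAt k
  | tt => True
  | ff => True
  | conj φ ψ => φ.ClosedAt k ∧ ψ.ClosedAt k
  | disj φ ψ => φ.ClosedAt k ∧ ψ.ClosedAt k
  | neg φ => φ.ClosedAt k
  | aexists φ => φ.ClosedAt (k + 1)
  | aforall φ => φ.ClosedAt (k + 1)

end AProp

/-! Session types.  Labeled choices are represented by association lists of
labels (natural numbers) and types.  Quantifiers bind a de Bruijn index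
variable. -/

inductive STy : Type
  | ichoice : List (ℕ × STy) → STy                -- ⊕{ℓ : A_ℓ}
  | echoice : List (ℕ × STy) → STy                -- &{ℓ : A_ℓ}
  | tensor : STy → STy → STy                      -- A ⊗ B
  | lolli : STy → STy → STy                       -- A ⊸ B
  | one : STy                                     -- 1
  | tname : ℕ → List AExp → STy                   -- V[ē]
  | sassert : AProp → STy → STy                   -- ?{φ}. A
  | sassume : AProp → STy → STy                   -- !{φ}. A
  | sexists : STy → STy                           -- ?n. A
  | sforall : STy → STy                           -- !n. A

namespace STy

/-- Substitution of arithmetic expressions for index variables in a session type. -/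
def subst (τ : ℕ → AExp) : STy → STy
  | ichoice L => ichoice (L.attach.map (fun p => (p.1.1, p.1.2.subst τ)))
  | echoice L => echoice (L.attach.map (fun p => (p.1.1, p.1.2.subst τ)))
  | tensor A B => tensor (A.subst τ) (B.subst τ)
  | lolli A B => lolli (A.subst τ) (B.subst τ)
  | one => one
  | tname v es => tname v (es.map (AExp.substN τ))
  | sassert φ A => sassert (φ.subst τ) (A.subst τ)
  | sassume φ A => sassume (φ.subst τ) (A.subst τ)
  | sexists A => sexists (A.subst (liftτ τ))
  | sforall A => sforall (A.subst (liftτ τ))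
decreasing_by
  all_goals simp_wf
  all_goals try omega
  all_goals
    (obtain ⟨⟨l, A⟩, hp⟩ := p
     have h := List.sizeOf_lt_of_mem hp
     simp [Prod.mk.sizeOf_spec] at h ⊢
     omega)

/-- Substituting a number for the index variable bound by a quantifier. -/
def subst0 (i : ℕ) (A : STy) : STy := A.subst (scons (AExp.const i) AExp.var)

/-- Ground instantiation of all free index variables by natural numbers. -/
def substC (σ : ℕ → ℕ) (A : STy) : STy := A.subst (fun n => AExp.const (σ n))

/-- All free index variables of the type are below `k`. -/
inductive ClosedAt : ℕ → STy → Prop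
  | ichoice {k L} : (∀ p ∈ L, ClosedAt k p.2) → ClosedAt k (ichoice L)
  | echoice {k L} : (∀ p ∈ L, ClosedAt k p.2) → ClosedAt k (echoice L)
  | tensor {k A B} : ClosedAt k A → ClosedAt k B → ClosedAt k (tensor A B)
  | lolli {k A B} : ClosedAt k A → ClosedAt k B → ClosedAt k (lolli A B)
  | one {k} : ClosedAt k one
  | tname {k v es} : (∀ e ∈ es, e.ClosedAt k) → ClosedAt k (tname v es)
  | sassert {k φ A} : φ.ClosedAt k → ClosedAt k A → ClosedAt k (sassert φ A)
  | sassume {k φ A} : φ.ClosedAt k → ClosedAt k A → ClosedAt k (sassume φ A)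
  | sexists {k A} : ClosedAt (k + 1) A → ClosedAt k (sexists A)
  | sforall {k A} : ClosedAt (k + 1) A → ClosedAt k (sforall A)

/-- A closed session type: no free index variables. -/
def Closed (A : STy) : Prop := ClosedAt 0 A

def isName : STy → Prop
  | tname _ _ => True
  | _ => False

end STy

/-- A signature is a finite list of type definitions; the type name `v` is
defined by the `v`-th entry (whose free index variables `0, …` are the
parameters `n̄`). -/
abbrev Sig : Type := List STy

/-- A contractive signature: no definition body is itself a type name. -/
def Contractive (Sg : Sig) : Prop := ∀ B ∈ Sg, ¬ B.isName

/-- Unfolding of a type: a type name is replaced by its instantiated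
definition; all other types are returned unchanged. -/
def unfoldT (Sg : Sig) : STy → STy
  | .tname v es => (Sg.getD v .one).subst (fun n => es.getD n (.const 0))
  | A => A

/-- The default (empty) assignment; used to evaluate closed propositions
in the standard model. -/
def σ0 : ℕ → ℕ := fun _ => 0

/-- Componentwise matching of labeled alternatives by a relation. -/
def MatchAlts (R : STy → STy → Prop) (L L' : List (ℕ × STy)) : Prop :=
  List.Forall₂ (fun p q => p.1 = q.1 ∧ R p.2 q.2) L L'

/-- `R` is a type bisimulation (Definition of type bisimulation). -/
def IsBisim (Sg : Sig) (R : STy → STy → Prop) : Prop :=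
  ∀ ⦃A B : STy⦄, R A B →
    (∀ L, unfoldT Sg A = .ichoice L →
      ∃ L', unfoldT Sg B = .ichoice L' ∧ MatchAlts R L L') ∧
    (∀ L, unfoldT Sg A = .echoice L →
      ∃ L', unfoldT Sg B = .echoice L' ∧ MatchAlts R L L') ∧
    (∀ A₁ A₂, unfoldT Sg A = .tensor A₁ A₂ →
      ∃ B₁ B₂, unfoldT Sg B = .tensor B₁ B₂ ∧ R A₁ B₁ ∧ R A₂ B₂) ∧
    (∀ A₁ A₂, unfoldT Sg A = .lolli A₁ A₂ →
      ∃ B₁ B₂, unfoldT Sg B = .lolli B₁ B₂ ∧ R A₁ B₁ ∧ R A₂ B₂) ∧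
    (unfoldT Sg A = .one → unfoldT Sg B = .one) ∧
    (∀ φ A', unfoldT Sg A = .sassert φ A' →
      ∃ ψ B', unfoldT Sg B = .sassert ψ B' ∧
        ((φ.holds σ0 ∧ ψ.holds σ0 ∧ R A' B') ∨ (¬ φ.holds σ0 ∧ ¬ ψ.holds σ0))) ∧
    (∀ φ A', unfoldT Sg A = .sassume φ A' →
      ∃ ψ B', unfoldT Sg B = .sassume ψ B' ∧
        ((φ.holds σ0 ∧ ψ.holds σ0 ∧ R A' B') ∨ (¬ φ.holds σ0 ∧ ¬ ψ.holds σ0))) ∧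
    (∀ A', unfoldT Sg A = .sexists A' →
      ∃ B', unfoldT Sg B = .sexists B' ∧ ∀ i : ℕ, R (A'.subst0 i) (B'.subst0 i)) ∧
    (∀ A', unfoldT Sg A = .sforall A' →
      ∃ B', unfoldT Sg B = .sforall B' ∧ ∀ i : ℕ, R (A'.subst0 i) (B'.subst0 i))

/-- Type equality: `A ≡ B` iff some type bisimulation relates them. -/
def TpEq (Sg : Sig) (A B : STy) : Prop :=
  ∃ R : STy → STy → Prop, IsBisim Sg R ∧ R A B

/-- The quantified judgment `∀V. C ⇒ A ≡ B`. -/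
def EqUnder (Sg : Sig) (C : AProp) (A B : STy) : Prop :=
  ∀ σ : ℕ → ℕ, C.holds σ → TpEq Sg (A.substC σ) (B.substC σ)

/-! The algorithmic type equality judgment. -/

/-- Semantic entailment `V ; C ⊨ φ` (over all assignments of naturals to the
index variables). -/
def Entails (C φ : AProp) : Prop := ∀ σ : ℕ → ℕ, C.holds σ → φ.holds σ

/-- `V ; C ⊨ φ ↔ ψ`. -/
def EntailsIff (C φ ψ : AProp) : Prop :=
  ∀ σ : ℕ → ℕ, C.holds σ → (φ.holds σ ↔ ψ.holds σ)

/-- Shifting a proposition when a fresh index variable is added to `V`. -/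
def AProp.shift (φ : AProp) : AProp := φ.subst (fun n => .var (n + 1))

/-- A closure `∀V′. C′ ⇒ V₁[ē₁] ≡ V₂[ē₂]` stored in the context `Γ` of the
algorithmic type-equality judgment. -/
structure Closure : Type where
  ctx : AProp
  v₁ : ℕ
  es₁ : List AExp
  v₂ : ℕ
  es₂ : List AExp

/-- Instantiation of the body of a type definition with index expressions. -/
def instDef (Sg : Sig) (v : ℕ) (es : List AExp) : STy :=
  (Sg.getD v .one).subst (fun n => es.getD n (.const 0))

/-- The algorithmic type equality judgment `V ; C ; Γ ⊢ A ≡ B`, parameterized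
by an extra side condition `G` imposed on the two types of every conclusion
(take `G := fun _ _ => True` for the plain judgment). -/
inductive AlgEq (Sg : Sig) (G : STy → STy → Prop) :
    AProp → List Closure → STy → STy → Prop
  | ichoice {C Γ} {L L' : List (ℕ × STy)} :
      G (.ichoice L) (.ichoice L') →
      L.map Prod.fst = L'.map Prod.fst →
      (∀ i, (h₁ : i < L.length) → (h₂ : i < L'.length) →
        AlgEq Sg G C Γ (L[i]).2 (L'[i]).2) →
      AlgEq Sg G C Γ (.ichoice L) (.ichoice L')
  | echoice {C Γ} {L L' : List (ℕ × STy)} :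
      G (.echoice L) (.echoice L') →
      L.map Prod.fst = L'.map Prod.fst →
      (∀ i, (h₁ : i < L.length) → (h₂ : i < L'.length) →
        AlgEq Sg G C Γ (L[i]).2 (L'[i]).2) →
      AlgEq Sg G C Γ (.echoice L) (.echoice L')
  | tensor {C Γ A₁ A₂ B₁ B₂} :
      G (.tensor A₁ A₂) (.tensor B₁ B₂) →
      AlgEq Sg G C Γ A₁ B₁ → AlgEq Sg G C Γ A₂ B₂ →
      AlgEq Sg G C Γ (.tensor A₁ A₂) (.tensor B₁ B₂)
  | lolli {C Γ A₁ A₂ B₁ B₂} :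
      G (.lolli A₁ A₂) (.lolli B₁ B₂) →
      AlgEq Sg G C Γ A₁ B₁ → AlgEq Sg G C Γ A₂ B₂ →
      AlgEq Sg G C Γ (.lolli A₁ A₂) (.lolli B₁ B₂)
  | one {C Γ} : G .one .one → AlgEq Sg G C Γ .one .one
  | sassert {C Γ φ ψ A B} :
      G (.sassert φ A) (.sassert ψ B) →
      EntailsIff C φ ψ →
      AlgEq Sg G (C.conj φ) Γ A B →
      AlgEq Sg G C Γ (.sassert φ A) (.sassert ψ B)
  | sassume {C Γ φ ψ A B} :
      G (.sassume φ A) (.sassume ψ B) →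
      EntailsIff C φ ψ →
      AlgEq Sg G (C.conj φ) Γ A B →
      AlgEq Sg G C Γ (.sassume φ A) (.sassume ψ B)
  | sexists {C Γ A B} :
      G (.sexists A) (.sexists B) →
      AlgEq Sg G C.shift Γ A B →
      AlgEq Sg G C Γ (.sexists A) (.sexists B)
  | sforall {C Γ A B} :
      G (.sforall A) (.sforall B) →
      AlgEq Sg G C.shift Γ A B →
      AlgEq Sg G C Γ (.sforall A) (.sforall B)
  | bot {C Γ A B} :
      G A B →
      (∀ σ : ℕ → ℕ, ¬ C.holds σ) →
      AlgEq Sg G C Γ A B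
  | defr {C Γ C' v₁ v₂} {E₁ E₂ es₁ es₂ : List AExp} :
      G (.tname v₁ es₁) (.tname v₂ es₂) →
      Closure.mk C' v₁ E₁ v₂ E₂ ∈ Γ →
      (∀ σ : ℕ → ℕ, C.holds σ → ∃ σ' : ℕ → ℕ, C'.holds σ' ∧
        E₁.map (AExp.eval σ') = es₁.map (AExp.eval σ) ∧
        E₂.map (AExp.eval σ') = es₂.map (AExp.eval σ)) →
      AlgEq Sg G C Γ (.tname v₁ es₁) (.tname v₂ es₂)
  | expd {C Γ v₁ v₂} {es₁ es₂ : List AExp} :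
      G (.tname v₁ es₁) (.tname v₂ es₂) →
      AlgEq Sg G C (Closure.mk C v₁ es₁ v₂ es₂ :: Γ)
        (instDef Sg v₁ es₁) (instDef Sg v₂ es₂) →
      AlgEq Sg G C Γ (.tname v₁ es₁) (.tname v₂ es₂)

/-! ### Auxiliary lemmas for the soundness proof -/

namespace AExp

theorem eval_subst (τ : ℕ → AExp) (ρ : ℕ → ℕ) (e : AExp) :
    (e.subst τ).eval ρ = e.eval (fun n => (τ n).eval ρ) := by
  induction e <;> simp [subst, eval, *]

theorem eval_of_closed {e : AExp} (h : e.hasVar = false) (ρ ρ' : ℕ → ℕ) :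
    e.eval ρ = e.eval ρ' := by
  induction e <;> simp_all [hasVar, eval]

theorem subst_of_closed {e : AExp} (h : e.hasVar = false) (τ : ℕ → AExp) :
    e.subst τ = e := by
  induction e <;> simp_all [hasVar, subst]

theorem hasVar_subst {e : AExp} {τ : ℕ → AExp} (h : ∀ n, (τ n).hasVar = false) :
    (e.subst τ).hasVar = false := by
  induction e <;> simp_all [hasVar, subst]

theorem eval_norm (e : AExp) (ρ : ℕ → ℕ) : e.norm.eval ρ = e.eval ρ := by
  unfold norm
  by_cases h : e.hasVar = true
  · simp [h]
  · simp only [Bool.not_eq_true] at h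
    simp [h, eval, eval_of_closed h (fun _ => 0) ρ]

theorem norm_of_closed {e : AExp} (h : e.hasVar = false) :
    e.norm = const (e.eval (fun _ => 0)) := by simp [norm, h]

theorem substN_ground {τ : ℕ → AExp} (h : ∀ n, (τ n).hasVar = false)
    (e : AExp) (ρ : ℕ → ℕ) :
    substN τ e = const ((e.subst τ).eval ρ) := by
  rw [substN, norm_of_closed (hasVar_subst h),
    eval_of_closed (hasVar_subst h) (fun _ => 0) ρ]

theorem subst_subst (τ τ' : ℕ → AExp) (e : AExp) :
    (e.subst τ).subst τ' = e.subst (fun n => (τ n).subst τ') := by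
  induction e <;> simp [subst, *]

theorem substN_substN (τ τ' : ℕ → AExp) (e : AExp) :
    substN τ' (substN τ e) = substN (fun n => (τ n).subst τ') e := by
  unfold substN
  rw [← subst_subst]
  unfold norm
  by_cases h : (e.subst τ).hasVar = true
  · simp [h]
  · simp only [Bool.not_eq_true] at h
    simp only [h, if_false, Bool.false_eq_true]
    rw [subst_of_closed (e := AExp.const _) rfl, subst_of_closed h]
    simp [hasVar, eval, h]

end AExp

theorem liftτ_zero (τ : ℕ → AExp) : liftτ τ 0 = AExp.var 0 := rfl

theorem liftτ_succ (τ : ℕ → AExp) (n : ℕ) :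
    liftτ τ (n + 1) = (τ n).subst (fun k => AExp.var (k + 1)) := rfl

theorem liftτ_comp (τ τ' : ℕ → AExp) :
    liftτ (fun n => (τ n).subst τ') = fun n => (liftτ τ n).subst (liftτ τ') := by
  funext n
  cases n with
  | zero => rfl
  | succ n =>
    rw [liftτ_succ, liftτ_succ, AExp.subst_subst, AExp.subst_subst]
    rfl

theorem liftτ_eval (τ : ℕ → AExp) (i : ℕ) (ρ : ℕ → ℕ) :
    (fun n => (liftτ τ n).eval (scons i ρ)) = scons i (fun n => (τ n).eval ρ) := by
  funext n
  cases n with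
  | zero => rfl
  | succ n =>
    show ((τ n).subst (fun k => AExp.var (k + 1))).eval (scons i ρ) = (τ n).eval ρ
    rw [AExp.eval_subst]
    rfl

namespace AProp

theorem holds_subst (φ : AProp) :
    ∀ (τ : ℕ → AExp) (ρ : ℕ → ℕ),
      (φ.subst τ).holds ρ ↔ φ.holds (fun n => (τ n).eval ρ) := by
  induction φ <;> intro τ ρ <;>
    simp only [subst, holds, AExp.eval_subst]
  case conj φ ψ ihφ ihψ => rw [ihφ, ihψ]
  case disj φ ψ ihφ ihψ => rw [ihφ, ihψ]
  case neg φ ih => rw [ih]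
  case aexists φ ih =>
    exact exists_congr fun i =>
      (ih (liftτ τ) (scons i ρ)).trans (by rw [liftτ_eval])
  case aforall φ ih =>
    exact forall_congr' fun i =>
      (ih (liftτ τ) (scons i ρ)).trans (by rw [liftτ_eval])

theorem subst_subst (φ : AProp) :
    ∀ τ τ' : ℕ → AExp,
      (φ.subst τ).subst τ' = φ.subst (fun n => (τ n).subst τ') := by
  induction φ <;> intro τ τ' <;>
    simp [subst, AExp.subst_subst, liftτ_comp, *]

end AProp

namespace STy

/-- A custom structural induction principle for `STy` (handling the nested
list in the choice constructors). -/
theorem ind' {motive : STy → Prop}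
    (ich : ∀ L, (∀ p ∈ L, motive p.2) → motive (ichoice L))
    (ech : ∀ L, (∀ p ∈ L, motive p.2) → motive (echoice L))
    (ten : ∀ A B, motive A → motive B → motive (tensor A B))
    (lol : ∀ A B, motive A → motive B → motive (lolli A B))
    (onem : motive one)
    (tn : ∀ v es, motive (tname v es))
    (sas : ∀ φ A, motive A → motive (sassert φ A))
    (sau : ∀ φ A, motive A → motive (sassume φ A))
    (sex : ∀ A, motive A → motive (sexists A))
    (sfa : ∀ A, motive A → motive (sforall A)) : ∀ A, motive A := by
  have key : ∀ n A, sizeOf A ≤ n → motive A := by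
    intro n
    induction n with
    | zero => intro A h; cases A <;> simp at h
    | succ n IH =>
      intro A h
      cases A with
      | ichoice L =>
        refine ich L fun p hp => IH _ ?_
        have h1 := List.sizeOf_lt_of_mem hp
        obtain ⟨a, b⟩ := p
        simp at h h1 ⊢
        omega
      | echoice L =>
        refine ech L fun p hp => IH _ ?_
        have h1 := List.sizeOf_lt_of_mem hp
        obtain ⟨a, b⟩ := p
        simp at h h1 ⊢
        omega
      | tensor A B =>
        simp at h
        exact ten A B (IH A (by omega)) (IH B (by omega))
      | lolli A B =>
        simp at h
        exact lol A B (IH A (by omega)) (IH B (by omega))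
      | one => exact onem
      | tname v es => exact tn v es
      | sassert φ A => simp at h; exact sas φ A (IH A (by omega))
      | sassume φ A => simp at h; exact sau φ A (IH A (by omega))
      | sexists A => simp at h; exact sex A (IH A (by omega))
      | sforall A => simp at h; exact sfa A (IH A (by omega))
  exact fun A => key (sizeOf A) A le_rfl

@[simp] theorem subst_ichoice (τ : ℕ → AExp) (L : List (ℕ × STy)) :
    (ichoice L).subst τ = ichoice (L.map fun p => (p.1, p.2.subst τ)) := by
  rw [subst, List.attach_map_val (l := L) (f := fun p => (p.1, p.2.subst τ))]

@[simp] theorem subst_echoice (τ : ℕ → AExp) (L : List (ℕ × STy)) :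
    (echoice L).subst τ = echoice (L.map fun p => (p.1, p.2.subst τ)) := by
  rw [subst, List.attach_map_val (l := L) (f := fun p => (p.1, p.2.subst τ))]

@[simp] theorem subst_tensor (τ : ℕ → AExp) (A B : STy) :
    (tensor A B).subst τ = tensor (A.subst τ) (B.subst τ) := by rw [subst]

@[simp] theorem subst_lolli (τ : ℕ → AExp) (A B : STy) :
    (lolli A B).subst τ = lolli (A.subst τ) (B.subst τ) := by rw [subst]

@[simp] theorem subst_one (τ : ℕ → AExp) : one.subst τ = one := by rw [subst]

@[simp] theorem subst_tname (τ : ℕ → AExp) (v : ℕ) (es : List AExp) :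
    (tname v es).subst τ = tname v (es.map (AExp.substN τ)) := by rw [subst]

@[simp] theorem subst_sassert (τ : ℕ → AExp) (φ : AProp) (A : STy) :
    (sassert φ A).subst τ = sassert (φ.subst τ) (A.subst τ) := by rw [subst]

@[simp] theorem subst_sassume (τ : ℕ → AExp) (φ : AProp) (A : STy) :
    (sassume φ A).subst τ = sassume (φ.subst τ) (A.subst τ) := by rw [subst]

@[simp] theorem subst_sexists (τ : ℕ → AExp) (A : STy) :
    (sexists A).subst τ = sexists (A.subst (liftτ τ)) := by rw [subst]

@[simp] theorem subst_sforall (τ : ℕ → AExp) (A : STy) :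
    (sforall A).subst τ = sforall (A.subst (liftτ τ)) := by rw [subst]

theorem subst_subst (A : STy) :
    ∀ τ τ' : ℕ → AExp,
      (A.subst τ).subst τ' = A.subst (fun n => (τ n).subst τ') := by
  induction A using ind' <;> intro τ τ'
  case ich L IH =>
    simp only [subst_ichoice, List.map_map]
    congr 1
    exact List.map_congr_left fun p hp => by simp [IH p hp]
  case ech L IH =>
    simp only [subst_echoice, List.map_map]
    congr 1
    exact List.map_congr_left fun p hp => by simp [IH p hp]
  case ten A B ihA ihB => simp [ihA, ihB]
  case lol A B ihA ihB => simp [ihA, ihB]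
  case onem => simp
  case tn v es =>
    simp only [subst_tname, List.map_map]
    congr 1
    exact List.map_congr_left fun e _ => AExp.substN_substN τ τ' e
  case sas φ A ih => simp [ih, AProp.subst_subst]
  case sau φ A ih => simp [ih, AProp.subst_subst]
  case sex A ih => simp [ih, liftτ_comp]
  case sfa A ih => simp [ih, liftτ_comp]

end STy

theorem AExp.getD_eval (es : List AExp) (n : ℕ) (ρ : ℕ → ℕ) :
    (es.getD n (AExp.const 0)).eval ρ = (es.map (AExp.eval ρ)).getD n 0 := by
  induction es generalizing n with
  | nil => cases n <;> rfl
  | cons e es ih => cases n with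
    | zero => rfl
    | succ n => simpa using ih n

/-- Equivalence of session types up to the denotation of embedded arithmetic
data (index expressions of type names and assertion propositions). -/
inductive TEquiv : STy → STy → Prop
  | ichoice {L L' : List (ℕ × STy)} :
      L.map Prod.fst = L'.map Prod.fst →
      (∀ i, (h₁ : i < L.length) → (h₂ : i < L'.length) →
        TEquiv (L[i]).2 (L'[i]).2) →
      TEquiv (.ichoice L) (.ichoice L')
  | echoice {L L' : List (ℕ × STy)} :
      L.map Prod.fst = L'.map Prod.fst →
      (∀ i, (h₁ : i < L.length) → (h₂ : i < L'.length) →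
        TEquiv (L[i]).2 (L'[i]).2) →
      TEquiv (.echoice L) (.echoice L')
  | tensor {A₁ A₂ B₁ B₂} : TEquiv A₁ B₁ → TEquiv A₂ B₂ →
      TEquiv (.tensor A₁ A₂) (.tensor B₁ B₂)
  | lolli {A₁ A₂ B₁ B₂} : TEquiv A₁ B₁ → TEquiv A₂ B₂ →
      TEquiv (.lolli A₁ A₂) (.lolli B₁ B₂)
  | one : TEquiv .one .one
  | tname {v es es'} : (∀ ρ : ℕ → ℕ, es.map (AExp.eval ρ) = es'.map (AExp.eval ρ)) →
      TEquiv (.tname v es) (.tname v es')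
  | sassert {φ ψ A B} : (∀ ρ : ℕ → ℕ, φ.holds ρ ↔ ψ.holds ρ) → TEquiv A B →
      TEquiv (.sassert φ A) (.sassert ψ B)
  | sassume {φ ψ A B} : (∀ ρ : ℕ → ℕ, φ.holds ρ ↔ ψ.holds ρ) → TEquiv A B →
      TEquiv (.sassume φ A) (.sassume ψ B)
  | sexists {A B} : TEquiv A B → TEquiv (.sexists A) (.sexists B)
  | sforall {A B} : TEquiv A B → TEquiv (.sforall A) (.sforall B)

namespace TEquiv

theorem refl : ∀ A, TEquiv A A := by
  intro A
  induction A using STy.ind'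
  case ich L IH =>
    exact .ichoice rfl fun i h₁ h₂ => IH _ (List.getElem_mem h₁)
  case ech L IH =>
    exact .echoice rfl fun i h₁ h₂ => IH _ (List.getElem_mem h₁)
  case ten A B ihA ihB => exact .tensor ihA ihB
  case lol A B ihA ihB => exact .lolli ihA ihB
  case onem => exact .one
  case tn v es => exact .tname fun _ => rfl
  case sas φ A ih => exact .sassert (fun _ => Iff.rfl) ih
  case sau φ A ih => exact .sassume (fun _ => Iff.rfl) ih
  case sex A ih => exact .sexists ih
  case sfa A ih => exact .sforall ih

theorem trans {A B : STy} (h : TEquiv A B) : ∀ {C : STy}, TEquiv B C → TEquiv A C := by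
  induction h with
  | ichoice hl hc IH =>
    intro C hBC
    cases hBC with
    | ichoice hl' hc' =>
      refine .ichoice (hl.trans hl') fun i h₁ h₂ => ?_
      have hlen : _ := congrArg List.length hl
      simp only [List.length_map] at hlen
      exact IH i h₁ (by omega) (hc' i (by omega) h₂)
  | echoice hl hc IH =>
    intro C hBC
    cases hBC with
    | echoice hl' hc' =>
      refine .echoice (hl.trans hl') fun i h₁ h₂ => ?_
      have hlen : _ := congrArg List.length hl
      simp only [List.length_map] at hlen
      exact IH i h₁ (by omega) (hc' i (by omega) h₂)
  | tensor h₁ h₂ IH₁ IH₂ =>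
    intro C hBC; cases hBC with
    | tensor g₁ g₂ => exact .tensor (IH₁ g₁) (IH₂ g₂)
  | lolli h₁ h₂ IH₁ IH₂ =>
    intro C hBC; cases hBC with
    | lolli g₁ g₂ => exact .lolli (IH₁ g₁) (IH₂ g₂)
  | one => exact fun h => h
  | tname he =>
    intro C hBC; cases hBC with
    | tname he' => exact .tname fun ρ => (he ρ).trans (he' ρ)
  | sassert hφ h IH =>
    intro C hBC; cases hBC with
    | sassert hψ g => exact .sassert (fun ρ => (hφ ρ).trans (hψ ρ)) (IH g)
  | sassume hφ h IH =>
    intro C hBC; cases hBC with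
    | sassume hψ g => exact .sassume (fun ρ => (hφ ρ).trans (hψ ρ)) (IH g)
  | sexists h IH =>
    intro C hBC; cases hBC with
    | sexists g => exact .sexists (IH g)
  | sforall h IH =>
    intro C hBC; cases hBC with
    | sforall g => exact .sforall (IH g)

/-- Eval-equivalence of substitutions. -/
def SEquiv (τ τ' : ℕ → AExp) : Prop := ∀ n (ρ : ℕ → ℕ), (τ n).eval ρ = (τ' n).eval ρ

theorem SEquiv.lift {τ τ' : ℕ → AExp} (h : SEquiv τ τ') :
    SEquiv (liftτ τ) (liftτ τ') := by
  intro n ρ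
  cases n with
  | zero => rfl
  | succ n =>
    rw [liftτ_succ, liftτ_succ, AExp.eval_subst, AExp.eval_subst]
    exact h n _

theorem subst_sequiv {τ τ' : ℕ → AExp} (h : SEquiv τ τ') :
    ∀ A : STy, TEquiv (A.subst τ) (A.subst τ') := by
  have key : ∀ A : STy, ∀ τ τ' : ℕ → AExp, SEquiv τ τ' →
      TEquiv (A.subst τ) (A.subst τ') := by
    intro A
    induction A using STy.ind' <;> intro τ τ' h
    case ich L IH =>
      simp only [STy.subst_ichoice]
      refine .ichoice (by simp [List.map_map, Function.comp_def]) ?_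
      intro i h₁ h₂
      simp only [List.getElem_map]
      exact IH _ (List.getElem_mem (by simpa using h₁)) τ τ' h
    case ech L IH =>
      simp only [STy.subst_echoice]
      refine .echoice (by simp [List.map_map, Function.comp_def]) ?_
      intro i h₁ h₂
      simp only [List.getElem_map]
      exact IH _ (List.getElem_mem (by simpa using h₁)) τ τ' h
    case ten A B ihA ihB => simpa using TEquiv.tensor (ihA _ _ h) (ihB _ _ h)
    case lol A B ihA ihB => simpa using TEquiv.lolli (ihA _ _ h) (ihB _ _ h)
    case onem => simpa using TEquiv.one
    case tn v es =>
      simp only [STy.subst_tname]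
      refine .tname fun ρ => ?_
      simp only [List.map_map]
      refine List.map_congr_left fun e _ => ?_
      show (AExp.substN τ e).eval ρ = (AExp.substN τ' e).eval ρ
      rw [AExp.substN, AExp.substN, AExp.eval_norm, AExp.eval_norm,
        AExp.eval_subst, AExp.eval_subst]
      congr 1
      funext n
      exact h n ρ
    case sas φ A ih =>
      simp only [STy.subst_sassert]
      refine .sassert (fun ρ => ?_) (ih _ _ h)
      rw [AProp.holds_subst, AProp.holds_subst,
        show (fun n => (τ n).eval ρ) = (fun n => (τ' n).eval ρ) from
          funext fun n => h n ρ]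
    case sau φ A ih =>
      simp only [STy.subst_sassume]
      refine .sassume (fun ρ => ?_) (ih _ _ h)
      rw [AProp.holds_subst, AProp.holds_subst,
        show (fun n => (τ n).eval ρ) = (fun n => (τ' n).eval ρ) from
          funext fun n => h n ρ]
    case sex A ih => simpa using TEquiv.sexists (ih _ _ h.lift)
    case sfa A ih => simpa using TEquiv.sforall (ih _ _ h.lift)
  exact fun A => key A τ τ' h

/-- `TEquiv` is a congruence with respect to substitution. -/
theorem subst {A B : STy} (h : TEquiv A B) :
    ∀ τ : ℕ → AExp, TEquiv (A.subst τ) (B.subst τ) := by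
  induction h with
  | @ichoice L L' hl hc IH =>
    intro τ
    simp only [STy.subst_ichoice]
    refine .ichoice (by simp only [List.map_map]; simpa [Function.comp_def]) ?_
    intro i h₁ h₂
    simp only [List.getElem_map]
    exact IH i (by simpa using h₁) (by simpa using h₂) τ
  | @echoice L L' hl hc IH =>
    intro τ
    simp only [STy.subst_echoice]
    refine .echoice (by simp only [List.map_map]; simpa [Function.comp_def]) ?_
    intro i h₁ h₂
    simp only [List.getElem_map]
    exact IH i (by simpa using h₁) (by simpa using h₂) τ
  | tensor h₁ h₂ IH₁ IH₂ => intro τ; simpa using .tensor (IH₁ τ) (IH₂ τ)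
  | lolli h₁ h₂ IH₁ IH₂ => intro τ; simpa using .lolli (IH₁ τ) (IH₂ τ)
  | one => intro τ; simpa using .one
  | @tname v es es' he =>
    intro τ
    simp only [STy.subst_tname]
    refine .tname fun ρ => ?_
    simp only [List.map_map]
    have : ∀ (l : List AExp),
        l.map (AExp.eval ρ ∘ AExp.substN τ) =
          l.map (AExp.eval (fun n => (τ n).eval ρ)) := by
      refine fun l => List.map_congr_left fun e _ => ?_
      show (AExp.substN τ e).eval ρ = _
      rw [AExp.substN, AExp.eval_norm, AExp.eval_subst]
    rw [this, this, he]
  | sassert hφ h IH =>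
    intro τ
    simp only [STy.subst_sassert]
    exact .sassert (fun ρ => by rw [AProp.holds_subst, AProp.holds_subst]; exact hφ _)
      (IH τ)
  | sassume hφ h IH =>
    intro τ
    simp only [STy.subst_sassume]
    exact .sassume (fun ρ => by rw [AProp.holds_subst, AProp.holds_subst]; exact hφ _)
      (IH τ)
  | sexists h IH => intro τ; simpa using .sexists (IH (liftτ τ))
  | sforall h IH => intro τ; simpa using .sforall (IH (liftτ τ))

end TEquiv

/-- A ground substitution realizing the assignment `ρ`: every entry is a
closed arithmetic expression with value `ρ n`. -/
def Gd (τ : ℕ → AExp) (ρ : ℕ → ℕ) : Prop :=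
  ∀ n, (τ n).hasVar = false ∧ ∀ ρ' : ℕ → ℕ, (τ n).eval ρ' = ρ n

theorem Gd.const (σ : ℕ → ℕ) : Gd (fun n => AExp.const (σ n)) σ :=
  fun _ => ⟨rfl, fun _ => rfl⟩

theorem gd_scons {τ : ℕ → AExp} {ρ : ℕ → ℕ} (h : Gd τ ρ) (i : ℕ) :
    Gd (fun n => (liftτ τ n).subst (scons (AExp.const i) AExp.var)) (scons i ρ) := by
  intro n
  cases n with
  | zero => exact ⟨rfl, fun _ => rfl⟩
  | succ n =>
    constructor
    · show ((((τ n).subst fun k => AExp.var (k + 1))).subst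
          (scons (AExp.const i) AExp.var)).hasVar = false
      rw [AExp.subst_of_closed (h n).1, AExp.subst_of_closed (h n).1]
      exact (h n).1
    · intro ρ'
      show (((τ n).subst fun k => AExp.var (k + 1)).subst
          (scons (AExp.const i) AExp.var)).eval ρ' = ρ n
      rw [AExp.subst_of_closed (h n).1, AExp.subst_of_closed (h n).1]
      exact (h n).2 ρ'

theorem getD_map_substN {τ : ℕ → AExp} {ρ : ℕ → ℕ} (h : Gd τ ρ)
    (es : List AExp) (n : ℕ) :
    (es.map (AExp.substN τ)).getD n (AExp.const 0) =
      AExp.const ((es.map (AExp.eval ρ)).getD n 0) := by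
  induction es generalizing n with
  | nil => cases n <;> rfl
  | cons e es ih =>
    cases n with
    | zero =>
      simp only [List.map_cons, List.getD_cons_zero]
      rw [AExp.substN_ground (fun n => (h n).1) e σ0, AExp.eval_subst]
      congr 2
      funext k
      exact (h k).2 σ0
    | succ n =>
      simp only [List.map_cons, List.getD_cons_succ]
      exact ih n

theorem unfoldT_nonname {Sg : Sig} {A : STy} (h : ∀ v es, A ≠ STy.tname v es) :
    unfoldT Sg A = A := by
  cases A <;> first | rfl | exact absurd rfl (h _ _)

theorem subst_nonname {A : STy} (h : ∀ v es, A ≠ STy.tname v es) (τ : ℕ → AExp) :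
    ∀ v es, A.subst τ ≠ STy.tname v es := by
  intro v es hh
  cases A <;> simp only [STy.subst_ichoice, STy.subst_echoice, STy.subst_tensor,
    STy.subst_lolli, STy.subst_one, STy.subst_tname, STy.subst_sassert,
    STy.subst_sassume, STy.subst_sexists, STy.subst_sforall] at hh <;>
    first | exact absurd rfl (h _ _) | exact STy.noConfusion hh

theorem instDef_not_name {Sg : Sig} (hSg : Contractive Sg) (v : ℕ) (es : List AExp) :
    ∀ w fs, instDef Sg v es ≠ STy.tname w fs := by
  have key : ∀ w fs, Sg.getD v STy.one ≠ STy.tname w fs := by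
    intro w fs hB
    by_cases hv : v < Sg.length
    · rw [List.getD_eq_getElem _ _ hv] at hB
      exact hSg _ (List.getElem_mem hv) (by rw [hB]; trivial)
    · rw [List.getD_eq_default _ _ (le_of_not_gt hv)] at hB
      exact STy.noConfusion hB
  rw [instDef]
  exact subst_nonname key _

theorem unfold_tname_subst (Sg : Sig) {τ : ℕ → AExp} {ρ : ℕ → ℕ} (h : Gd τ ρ)
    (v : ℕ) (es : List AExp) :
    unfoldT Sg ((STy.tname v es).subst τ) =
      (Sg.getD v STy.one).subst
        (fun n => AExp.const ((es.map (AExp.eval ρ)).getD n 0)) := by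
  simp only [STy.subst_tname]
  show (Sg.getD v STy.one).subst _ = _
  congr 1
  funext n
  exact getD_map_substN h es n

theorem tequiv_unfold_inst (Sg : Sig) {τ : ℕ → AExp} {ρ : ℕ → ℕ} (hτ : Gd τ ρ)
    {τ' : ℕ → AExp} {E es : List AExp}
    (hE : ∀ n (ρ'' : ℕ → ℕ),
      ((E.getD n (AExp.const 0)).subst τ').eval ρ'' = (es.map (AExp.eval ρ)).getD n 0)
    (v : ℕ) :
    TEquiv (unfoldT Sg ((STy.tname v es).subst τ)) ((instDef Sg v E).subst τ') := by
  rw [unfold_tname_subst Sg hτ, instDef, STy.subst_subst]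
  refine TEquiv.subst_sequiv
    (τ := fun n => AExp.const ((es.map (AExp.eval ρ)).getD n 0))
    (τ' := fun n => (E.getD n (AExp.const 0)).subst τ') (fun n ρ'' => ?_) _
  exact (hE n ρ'').symm

theorem TEquiv.unfold (Sg : Sig) {X Y : STy} (h : TEquiv X Y) :
    TEquiv (unfoldT Sg X) (unfoldT Sg Y) := by
  cases h with
  | ichoice hl hc => exact .ichoice hl hc
  | echoice hl hc => exact .echoice hl hc
  | tensor h₁ h₂ => exact .tensor h₁ h₂
  | lolli h₁ h₂ => exact .lolli h₁ h₂
  | one => exact .one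
  | @tname v es es' he =>
    show TEquiv ((Sg.getD v STy.one).subst _) ((Sg.getD v STy.one).subst _)
    refine TEquiv.subst_sequiv (fun n ρ => ?_) _
    rw [AExp.getD_eval, AExp.getD_eval, he ρ]
  | sassert hφ h => exact .sassert hφ h
  | sassume hφ h => exact .sassume hφ h
  | sexists h => exact .sexists h
  | sforall h => exact .sforall h

/-- Validity of a closure context: every closure is justified by a derivation
of the equality of the corresponding instantiated definitions (in the context
extended by the closure itself). -/
def Valid (Sg : Sig) : List Closure → Prop
  | [] => True
  | cl :: Γ => Valid Sg Γ ∧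
      AlgEq Sg (fun _ _ => True) cl.ctx (cl :: Γ)
        (instDef Sg cl.v₁ cl.es₁) (instDef Sg cl.v₂ cl.es₂)

theorem valid_lookup {Sg : Sig} {Γ : List Closure} {cl : Closure}
    (h : Valid Sg Γ) (hm : cl ∈ Γ) : ∃ Γ', Valid Sg (cl :: Γ') := by
  induction Γ with
  | nil => cases hm
  | cons c Γ ih =>
    simp only [Valid] at h
    rcases List.mem_cons.1 hm with rfl | hm'
    · exact ⟨Γ, by simp only [Valid]; exact h⟩
    · exact ih h.1 hm'

/-- The body of the bisimulation condition, on already-unfolded types. -/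
def StepB (R : STy → STy → Prop) (X Y : STy) : Prop :=
  (∀ L, X = .ichoice L → ∃ L', Y = .ichoice L' ∧ MatchAlts R L L') ∧
  (∀ L, X = .echoice L → ∃ L', Y = .echoice L' ∧ MatchAlts R L L') ∧
  (∀ A₁ A₂, X = .tensor A₁ A₂ → ∃ B₁ B₂, Y = .tensor B₁ B₂ ∧ R A₁ B₁ ∧ R A₂ B₂) ∧
  (∀ A₁ A₂, X = .lolli A₁ A₂ → ∃ B₁ B₂, Y = .lolli B₁ B₂ ∧ R A₁ B₁ ∧ R A₂ B₂) ∧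
  (X = .one → Y = .one) ∧
  (∀ φ A', X = .sassert φ A' → ∃ ψ B', Y = .sassert ψ B' ∧
    ((φ.holds σ0 ∧ ψ.holds σ0 ∧ R A' B') ∨ (¬ φ.holds σ0 ∧ ¬ ψ.holds σ0))) ∧
  (∀ φ A', X = .sassume φ A' → ∃ ψ B', Y = .sassume ψ B' ∧
    ((φ.holds σ0 ∧ ψ.holds σ0 ∧ R A' B') ∨ (¬ φ.holds σ0 ∧ ¬ ψ.holds σ0))) ∧
  (∀ A', X = .sexists A' → ∃ B', Y = .sexists B' ∧
    ∀ i : ℕ, R (A'.subst0 i) (B'.subst0 i)) ∧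
  (∀ A', X = .sforall A' → ∃ B', Y = .sforall B' ∧
    ∀ i : ℕ, R (A'.subst0 i) (B'.subst0 i))

namespace StepB

variable {R : STy → STy → Prop}

theorem of_ichoice {L L'} (h : MatchAlts R L L') :
    StepB R (.ichoice L) (.ichoice L') := by
  refine ⟨?_, ?_, ?_, ?_, ?_, ?_, ?_, ?_, ?_⟩
  · intro M hM; cases hM; exact ⟨L', rfl, h⟩
  all_goals intros; simp_all

theorem of_echoice {L L'} (h : MatchAlts R L L') :
    StepB R (.echoice L) (.echoice L') := by
  refine ⟨?_, ?_, ?_, ?_, ?_, ?_, ?_, ?_, ?_⟩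
  · intros; simp_all
  · intro M hM; cases hM; exact ⟨L', rfl, h⟩
  all_goals intros; simp_all

theorem of_tensor {A₁ A₂ B₁ B₂} (h₁ : R A₁ B₁) (h₂ : R A₂ B₂) :
    StepB R (.tensor A₁ A₂) (.tensor B₁ B₂) := by
  refine ⟨?_, ?_, ?_, ?_, ?_, ?_, ?_, ?_, ?_⟩
  · intros; simp_all
  · intros; simp_all
  · intro X₁ X₂ hX
    cases hX
    exact ⟨B₁, B₂, rfl, h₁, h₂⟩
  all_goals intros; simp_all

theorem of_lolli {A₁ A₂ B₁ B₂} (h₁ : R A₁ B₁) (h₂ : R A₂ B₂) :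
    StepB R (.lolli A₁ A₂) (.lolli B₁ B₂) := by
  refine ⟨?_, ?_, ?_, ?_, ?_, ?_, ?_, ?_, ?_⟩
  · intros; simp_all
  · intros; simp_all
  · intros; simp_all
  · intro X₁ X₂ hX
    cases hX
    exact ⟨B₁, B₂, rfl, h₁, h₂⟩
  all_goals intros; simp_all

theorem of_one : StepB R .one .one := by
  refine ⟨?_, ?_, ?_, ?_, ?_, ?_, ?_, ?_, ?_⟩
  all_goals intros; simp_all

theorem of_sassert {φ ψ A B}
    (h : (φ.holds σ0 ∧ ψ.holds σ0 ∧ R A B) ∨ (¬ φ.holds σ0 ∧ ¬ ψ.holds σ0)) :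
    StepB R (.sassert φ A) (.sassert ψ B) := by
  refine ⟨?_, ?_, ?_, ?_, ?_, ?_, ?_, ?_, ?_⟩
  case refine_6 =>
    intro φ' A' hA
    cases hA
    exact ⟨ψ, B, rfl, h⟩
  all_goals intros; simp_all

theorem of_sassume {φ ψ A B}
    (h : (φ.holds σ0 ∧ ψ.holds σ0 ∧ R A B) ∨ (¬ φ.holds σ0 ∧ ¬ ψ.holds σ0)) :
    StepB R (.sassume φ A) (.sassume ψ B) := by
  refine ⟨?_, ?_, ?_, ?_, ?_, ?_, ?_, ?_, ?_⟩
  case refine_7 =>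
    intro φ' A' hA
    cases hA
    exact ⟨ψ, B, rfl, h⟩
  all_goals intros; simp_all

theorem of_sexists {A B} (h : ∀ i : ℕ, R (A.subst0 i) (B.subst0 i)) :
    StepB R (.sexists A) (.sexists B) := by
  refine ⟨?_, ?_, ?_, ?_, ?_, ?_, ?_, ?_, ?_⟩
  case refine_8 =>
    intro A' hA
    cases hA
    exact ⟨B, rfl, h⟩
  all_goals intros; simp_all

theorem of_sforall {A B} (h : ∀ i : ℕ, R (A.subst0 i) (B.subst0 i)) :
    StepB R (.sforall A) (.sforall B) := by
  refine ⟨?_, ?_, ?_, ?_, ?_, ?_, ?_, ?_, ?_⟩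
  case refine_9 =>
    intro A' hA
    cases hA
    exact ⟨B, rfl, h⟩
  all_goals intros; simp_all

end StepB

/-- The candidate bisimulation: ground instances of conclusions of the
algorithmic judgment with valid contexts. -/
def RelA (Sg : Sig) (X Y : STy) : Prop :=
  ∃ (C : AProp) (Γ : List Closure) (A B : STy) (ρ : ℕ → ℕ) (τ₁ τ₂ : ℕ → AExp), Valid Sg Γ ∧
    AlgEq Sg (fun _ _ => True) C Γ A B ∧
    C.holds ρ ∧ Gd τ₁ ρ ∧ Gd τ₂ ρ ∧ X = A.subst τ₁ ∧ Y = B.subst τ₂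

/-- The closure of `Rel` under `TEquiv` on both sides. -/
def RelC (Sg : Sig) (X Y : STy) : Prop :=
  ∃ X' Y', TEquiv X X' ∧ TEquiv Y Y' ∧ RelA Sg X' Y'

theorem RelC.sat {Sg : Sig} {a a' b b' : STy} (h₁ : TEquiv a a')
    (h : RelC Sg a' b') (h₂ : TEquiv b b') : RelC Sg a b := by
  obtain ⟨X', Y', hx, hy, r⟩ := h
  exact ⟨X', Y', h₁.trans hx, h₂.trans hy, r⟩

theorem RelA.relC {Sg : Sig} {a b : STy} (h : RelA Sg a b) : RelC Sg a b :=
  ⟨a, b, TEquiv.refl a, TEquiv.refl b, h⟩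

theorem stepB_transfer {Sg : Sig} {X X' Y Y' : STy} (hX : TEquiv X X')
    (hY : TEquiv Y Y') (hs : StepB (RelC Sg) X' Y') : StepB (RelC Sg) X Y := by
  obtain ⟨s1, s2, s3, s4, s5, s6, s7, s8, s9⟩ := hs
  refine ⟨?_, ?_, ?_, ?_, ?_, ?_, ?_, ?_, ?_⟩
  · rintro L rfl
    cases hX with
    | ichoice hl hc =>
      rename_i L₂
      obtain ⟨M₂, rfl, hM⟩ := s1 L₂ rfl
      cases hY with
      | ichoice hl' hc' =>
        rename_i M
        refine ⟨M, rfl, ?_⟩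
        obtain ⟨hMlen, hMget⟩ := List.forall₂_iff_get.1 hM
        have e1 := congrArg List.length hl
        have e2 := congrArg List.length hl'
        simp only [List.length_map] at e1 e2
        refine List.forall₂_iff_get.2 ⟨by omega, fun i h₁ h₂ => ?_⟩
        have hb2 : i < L₂.length := by omega
        have hb3 : i < M₂.length := by omega
        obtain ⟨hpq, hrel⟩ := hMget i hb2 hb3
        simp only [List.get_eq_getElem] at hpq hrel ⊢
        constructor
        · have q1 : (L.map Prod.fst).getD i 0 = (L₂.map Prod.fst).getD i 0 := by
            rw [hl]
          have q2 : (M.map Prod.fst).getD i 0 = (M₂.map Prod.fst).getD i 0 := by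
            rw [hl']
          rw [List.getD_eq_getElem _ _ (by simpa using h₁),
            List.getD_eq_getElem _ _ (by simpa using hb2),
            List.getElem_map, List.getElem_map] at q1
          rw [List.getD_eq_getElem _ _ (by simpa using h₂),
            List.getD_eq_getElem _ _ (by simpa using hb3),
            List.getElem_map, List.getElem_map] at q2
          rw [q1, q2, hpq]
        · exact RelC.sat (hc i h₁ hb2) hrel (hc' i h₂ hb3)
  · rintro L rfl
    cases hX with
    | echoice hl hc =>
      rename_i L₂
      obtain ⟨M₂, rfl, hM⟩ := s2 L₂ rfl
      cases hY with
      | echoice hl' hc' =>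
        rename_i M
        refine ⟨M, rfl, ?_⟩
        obtain ⟨hMlen, hMget⟩ := List.forall₂_iff_get.1 hM
        have e1 := congrArg List.length hl
        have e2 := congrArg List.length hl'
        simp only [List.length_map] at e1 e2
        refine List.forall₂_iff_get.2 ⟨by omega, fun i h₁ h₂ => ?_⟩
        have hb2 : i < L₂.length := by omega
        have hb3 : i < M₂.length := by omega
        obtain ⟨hpq, hrel⟩ := hMget i hb2 hb3
        simp only [List.get_eq_getElem] at hpq hrel ⊢
        constructor
        · have q1 : (L.map Prod.fst).getD i 0 = (L₂.map Prod.fst).getD i 0 := by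
            rw [hl]
          have q2 : (M.map Prod.fst).getD i 0 = (M₂.map Prod.fst).getD i 0 := by
            rw [hl']
          rw [List.getD_eq_getElem _ _ (by simpa using h₁),
            List.getD_eq_getElem _ _ (by simpa using hb2),
            List.getElem_map, List.getElem_map] at q1
          rw [List.getD_eq_getElem _ _ (by simpa using h₂),
            List.getD_eq_getElem _ _ (by simpa using hb3),
            List.getElem_map, List.getElem_map] at q2
          rw [q1, q2, hpq]
        · exact RelC.sat (hc i h₁ hb2) hrel (hc' i h₂ hb3)
  · rintro A₁ A₂ rfl
    cases hX with
    | tensor hA₁ hA₂ =>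
      rename_i A₁' A₂'
      obtain ⟨B₁', B₂', rfl, r₁, r₂⟩ := s3 A₁' A₂' rfl
      cases hY with
      | tensor hB₁ hB₂ =>
        rename_i B₁ B₂
        exact ⟨B₁, B₂, rfl, RelC.sat hA₁ r₁ hB₁, RelC.sat hA₂ r₂ hB₂⟩
  · rintro A₁ A₂ rfl
    cases hX with
    | lolli hA₁ hA₂ =>
      rename_i A₁' A₂'
      obtain ⟨B₁', B₂', rfl, r₁, r₂⟩ := s4 A₁' A₂' rfl
      cases hY with
      | lolli hB₁ hB₂ =>
        rename_i B₁ B₂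
        exact ⟨B₁, B₂, rfl, RelC.sat hA₁ r₁ hB₁, RelC.sat hA₂ r₂ hB₂⟩
  · rintro rfl
    cases hX with
    | one =>
      have := s5 rfl
      subst this
      cases hY with
      | one => rfl
  · rintro φ A rfl
    cases hX with
    | sassert hφ hA =>
      rename_i φ' A'
      obtain ⟨ψ', B', rfl, hcond⟩ := s6 φ' A' rfl
      cases hY with
      | sassert hψ hB =>
        rename_i ψ B
        refine ⟨ψ, B, rfl, ?_⟩
        rcases hcond with ⟨hφ', hψ', r⟩ | ⟨hφ', hψ'⟩
        · exact Or.inl ⟨(hφ σ0).2 hφ', (hψ σ0).2 hψ', RelC.sat hA r hB⟩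
        · exact Or.inr ⟨fun c => hφ' ((hφ σ0).1 c), fun c => hψ' ((hψ σ0).1 c)⟩
  · rintro φ A rfl
    cases hX with
    | sassume hφ hA =>
      rename_i φ' A'
      obtain ⟨ψ', B', rfl, hcond⟩ := s7 φ' A' rfl
      cases hY with
      | sassume hψ hB =>
        rename_i ψ B
        refine ⟨ψ, B, rfl, ?_⟩
        rcases hcond with ⟨hφ', hψ', r⟩ | ⟨hφ', hψ'⟩
        · exact Or.inl ⟨(hφ σ0).2 hφ', (hψ σ0).2 hψ', RelC.sat hA r hB⟩
        · exact Or.inr ⟨fun c => hφ' ((hφ σ0).1 c), fun c => hψ' ((hψ σ0).1 c)⟩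
  · rintro A rfl
    cases hX with
    | sexists hA =>
      rename_i A'
      obtain ⟨B', rfl, r⟩ := s8 A' rfl
      cases hY with
      | sexists hB =>
        rename_i B
        exact ⟨B, rfl, fun i =>
          RelC.sat (hA.subst _) (r i) (hB.subst _)⟩
  · rintro A rfl
    cases hX with
    | sforall hA =>
      rename_i A'
      obtain ⟨B', rfl, r⟩ := s9 A' rfl
      cases hY with
      | sforall hB =>
        rename_i B
        exact ⟨B, rfl, fun i =>
          RelC.sat (hA.subst _) (r i) (hB.subst _)⟩

theorem holds_subst_gd {φ : AProp} {τ : ℕ → AExp} {ρ : ℕ → ℕ} (h : Gd τ ρ) :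
    (φ.subst τ).holds σ0 ↔ φ.holds ρ := by
  rw [AProp.holds_subst, show (fun n => (τ n).eval σ0) = ρ from
    funext fun n => (h n).2 σ0]

/-- The one-step lemma for conclusions that are not type names. -/
theorem core {Sg : Sig} (hSg : Contractive Sg) {C : AProp} {Γ : List Closure}
    {A B : STy} (d : AlgEq Sg (fun _ _ => True) C Γ A B)
    (hA : ∀ v es, A ≠ STy.tname v es) (hV : Valid Sg Γ)
    {ρ : ℕ → ℕ} {τ₁ τ₂ : ℕ → AExp} (h₁ : Gd τ₁ ρ) (h₂ : Gd τ₂ ρ)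
    (hC : C.holds ρ) :
    StepB (RelC Sg) (A.subst τ₁) (B.subst τ₂) := by
  cases d with
  | @ichoice _ _ L L' hG hl hc =>
    simp only [STy.subst_ichoice]
    refine StepB.of_ichoice ?_
    have e1 := congrArg List.length hl
    simp only [List.length_map] at e1
    refine List.forall₂_iff_get.2 ⟨by simpa using e1, fun i hb₁ hb₂ => ?_⟩
    simp only [List.get_eq_getElem, List.getElem_map]
    have hb₁' : i < L.length := by simpa using hb₁
    have hb₂' : i < L'.length := by simpa using hb₂
    constructor
    · have q : (L.map Prod.fst).getD i 0 = (L'.map Prod.fst).getD i 0 := by rw [hl]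
      rw [List.getD_eq_getElem _ _ (by simpa using hb₁'),
        List.getD_eq_getElem _ _ (by simpa using hb₂'),
        List.getElem_map, List.getElem_map] at q
      exact q
    · exact RelA.relC
        ⟨C, Γ, _, _, ρ, τ₁, τ₂, hV, hc i hb₁' hb₂', hC, h₁, h₂, rfl, rfl⟩
  | @echoice _ _ L L' hG hl hc =>
    simp only [STy.subst_echoice]
    refine StepB.of_echoice ?_
    have e1 := congrArg List.length hl
    simp only [List.length_map] at e1
    refine List.forall₂_iff_get.2 ⟨by simpa using e1, fun i hb₁ hb₂ => ?_⟩
    simp only [List.get_eq_getElem, List.getElem_map]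
    have hb₁' : i < L.length := by simpa using hb₁
    have hb₂' : i < L'.length := by simpa using hb₂
    constructor
    · have q : (L.map Prod.fst).getD i 0 = (L'.map Prod.fst).getD i 0 := by rw [hl]
      rw [List.getD_eq_getElem _ _ (by simpa using hb₁'),
        List.getD_eq_getElem _ _ (by simpa using hb₂'),
        List.getElem_map, List.getElem_map] at q
      exact q
    · exact RelA.relC
        ⟨C, Γ, _, _, ρ, τ₁, τ₂, hV, hc i hb₁' hb₂', hC, h₁, h₂, rfl, rfl⟩
  | tensor hG d₁ d₂ =>
    simp only [STy.subst_tensor]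
    exact StepB.of_tensor
      (RelA.relC ⟨C, Γ, _, _, ρ, τ₁, τ₂, hV, d₁, hC, h₁, h₂, rfl, rfl⟩)
      (RelA.relC ⟨C, Γ, _, _, ρ, τ₁, τ₂, hV, d₂, hC, h₁, h₂, rfl, rfl⟩)
  | lolli hG d₁ d₂ =>
    simp only [STy.subst_lolli]
    exact StepB.of_lolli
      (RelA.relC ⟨C, Γ, _, _, ρ, τ₁, τ₂, hV, d₁, hC, h₁, h₂, rfl, rfl⟩)
      (RelA.relC ⟨C, Γ, _, _, ρ, τ₁, τ₂, hV, d₂, hC, h₁, h₂, rfl, rfl⟩)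
  | one hG =>
    simp only [STy.subst_one]
    exact StepB.of_one
  | @sassert _ _ φ ψ A' B' hG hiff hd =>
    simp only [STy.subst_sassert]
    refine StepB.of_sassert ?_
    by_cases hφ : φ.holds ρ
    · refine Or.inl ⟨(holds_subst_gd h₁).2 hφ,
        (holds_subst_gd h₂).2 ((hiff ρ hC).1 hφ), ?_⟩
      exact RelA.relC
        ⟨C.conj φ, Γ, _, _, ρ, τ₁, τ₂, hV, hd, ⟨hC, hφ⟩, h₁, h₂, rfl, rfl⟩
    · exact Or.inr ⟨fun c => hφ ((holds_subst_gd h₁).1 c),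
        fun c => hφ ((hiff ρ hC).2 ((holds_subst_gd h₂).1 c))⟩
  | @sassume _ _ φ ψ A' B' hG hiff hd =>
    simp only [STy.subst_sassume]
    refine StepB.of_sassume ?_
    by_cases hφ : φ.holds ρ
    · refine Or.inl ⟨(holds_subst_gd h₁).2 hφ,
        (holds_subst_gd h₂).2 ((hiff ρ hC).1 hφ), ?_⟩
      exact RelA.relC
        ⟨C.conj φ, Γ, _, _, ρ, τ₁, τ₂, hV, hd, ⟨hC, hφ⟩, h₁, h₂, rfl, rfl⟩
    · exact Or.inr ⟨fun c => hφ ((holds_subst_gd h₁).1 c),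
        fun c => hφ ((hiff ρ hC).2 ((holds_subst_gd h₂).1 c))⟩
  | @sexists _ _ A' B' hG hd =>
    simp only [STy.subst_sexists]
    refine StepB.of_sexists fun i => ?_
    refine RelA.relC ⟨C.shift, Γ, A', B', scons i ρ, _, _, hV, hd, ?_,
      gd_scons h₁ i, gd_scons h₂ i, ?_, ?_⟩
    · rw [AProp.shift, AProp.holds_subst]
      exact hC
    · show (A'.subst (liftτ τ₁)).subst0 i = A'.subst _
      rw [STy.subst0, STy.subst_subst]
    · show (B'.subst (liftτ τ₂)).subst0 i = B'.subst _
      rw [STy.subst0, STy.subst_subst]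
  | @sforall _ _ A' B' hG hd =>
    simp only [STy.subst_sforall]
    refine StepB.of_sforall fun i => ?_
    refine RelA.relC ⟨C.shift, Γ, A', B', scons i ρ, _, _, hV, hd, ?_,
      gd_scons h₁ i, gd_scons h₂ i, ?_, ?_⟩
    · rw [AProp.shift, AProp.holds_subst]
      exact hC
    · show (A'.subst (liftτ τ₁)).subst0 i = A'.subst _
      rw [STy.subst0, STy.subst_subst]
    · show (B'.subst (liftτ τ₂)).subst0 i = B'.subst _
      rw [STy.subst0, STy.subst_subst]
  | bot hG hb => exact absurd hC (hb ρ)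
  | defr hG hm he => exact absurd rfl (hA _ _)
  | expd hG hd => exact absurd rfl (hA _ _)

theorem main0 {Sg : Sig} (hSg : Contractive Sg) {C : AProp} {Γ : List Closure}
    {A B : STy} (d : AlgEq Sg (fun _ _ => True) C Γ A B) (hV : Valid Sg Γ)
    {ρ : ℕ → ℕ} {τ₁ τ₂ : ℕ → AExp} (h₁ : Gd τ₁ ρ) (h₂ : Gd τ₂ ρ)
    (hC : C.holds ρ) :
    StepB (RelC Sg) (unfoldT Sg (A.subst τ₁)) (unfoldT Sg (B.subst τ₂)) := by
  have nn : ∀ {X : STy} (τ : ℕ → AExp), (∀ v es, X ≠ STy.tname v es) →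
      unfoldT Sg (X.subst τ) = X.subst τ := fun τ hX =>
    unfoldT_nonname (subst_nonname hX τ)
  cases d with
  | ichoice hG hl hc =>
    rw [nn τ₁ (fun _ _ h => STy.noConfusion h), nn τ₂ (fun _ _ h => STy.noConfusion h)]
    exact core hSg (.ichoice hG hl hc) (fun _ _ h => STy.noConfusion h) hV h₁ h₂ hC
  | echoice hG hl hc =>
    rw [nn τ₁ (fun _ _ h => STy.noConfusion h), nn τ₂ (fun _ _ h => STy.noConfusion h)]
    exact core hSg (.echoice hG hl hc) (fun _ _ h => STy.noConfusion h) hV h₁ h₂ hC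
  | tensor hG d₁ d₂ =>
    rw [nn τ₁ (fun _ _ h => STy.noConfusion h), nn τ₂ (fun _ _ h => STy.noConfusion h)]
    exact core hSg (.tensor hG d₁ d₂) (fun _ _ h => STy.noConfusion h) hV h₁ h₂ hC
  | lolli hG d₁ d₂ =>
    rw [nn τ₁ (fun _ _ h => STy.noConfusion h), nn τ₂ (fun _ _ h => STy.noConfusion h)]
    exact core hSg (.lolli hG d₁ d₂) (fun _ _ h => STy.noConfusion h) hV h₁ h₂ hC
  | one hG =>
    rw [nn τ₁ (fun _ _ h => STy.noConfusion h), nn τ₂ (fun _ _ h => STy.noConfusion h)]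
    exact core hSg (.one hG) (fun _ _ h => STy.noConfusion h) hV h₁ h₂ hC
  | sassert hG hiff hd =>
    rw [nn τ₁ (fun _ _ h => STy.noConfusion h), nn τ₂ (fun _ _ h => STy.noConfusion h)]
    exact core hSg (.sassert hG hiff hd) (fun _ _ h => STy.noConfusion h) hV h₁ h₂ hC
  | sassume hG hiff hd =>
    rw [nn τ₁ (fun _ _ h => STy.noConfusion h), nn τ₂ (fun _ _ h => STy.noConfusion h)]
    exact core hSg (.sassume hG hiff hd) (fun _ _ h => STy.noConfusion h) hV h₁ h₂ hC
  | sexists hG hd =>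
    rw [nn τ₁ (fun _ _ h => STy.noConfusion h), nn τ₂ (fun _ _ h => STy.noConfusion h)]
    exact core hSg (.sexists hG hd) (fun _ _ h => STy.noConfusion h) hV h₁ h₂ hC
  | sforall hG hd =>
    rw [nn τ₁ (fun _ _ h => STy.noConfusion h), nn τ₂ (fun _ _ h => STy.noConfusion h)]
    exact core hSg (.sforall hG hd) (fun _ _ h => STy.noConfusion h) hV h₁ h₂ hC
  | bot hG hb => exact absurd hC (hb ρ)
  | @expd _ _ v₁ v₂ es₁ es₂ hG hd =>
    have hval : Valid Sg (Closure.mk C v₁ es₁ v₂ es₂ :: Γ) := by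
      simp only [Valid]
      exact ⟨hV, hd⟩
    have hstep := core hSg hd (instDef_not_name hSg v₁ es₁) hval h₁ h₂ hC
    have key : ∀ (τ : ℕ → AExp), Gd τ ρ → ∀ (es : List AExp) (n : ℕ) (ρ'' : ℕ → ℕ),
        ((es.getD n (AExp.const 0)).subst τ).eval ρ'' = (es.map (AExp.eval ρ)).getD n 0 := by
      intro τ hτ es n ρ''
      rw [AExp.eval_subst,
        show (fun k => (τ k).eval ρ'') = ρ from funext fun k => (hτ k).2 ρ'']
      exact AExp.getD_eval es n ρ
    exact stepB_transfer
      (tequiv_unfold_inst Sg h₁ (key τ₁ h₁ es₁) v₁)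
      (tequiv_unfold_inst Sg h₂ (key τ₂ h₂ es₂) v₂) hstep
  | @defr _ _ C' v₁ v₂ E₁ E₂ es₁ es₂ hG hm hent =>
    obtain ⟨σ', hC', hm₁, hm₂⟩ := hent ρ hC
    obtain ⟨Γ', hVc⟩ := valid_lookup hV hm
    have hV' := hVc
    simp only [Valid] at hV'
    have hd' := hV'.2
    have hstep := core hSg hd' (instDef_not_name hSg v₁ E₁) hVc
      (Gd.const σ') (Gd.const σ') hC'
    have key : ∀ (E es : List AExp), E.map (AExp.eval σ') = es.map (AExp.eval ρ) →
        ∀ (n : ℕ) (ρ'' : ℕ → ℕ),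
        ((E.getD n (AExp.const 0)).subst (fun k => AExp.const (σ' k))).eval ρ'' =
          (es.map (AExp.eval ρ)).getD n 0 := by
      intro E es hEes n ρ''
      rw [AExp.eval_subst]
      show (E.getD n (AExp.const 0)).eval σ' = _
      rw [AExp.getD_eval E n σ', hEes]
    exact stepB_transfer
      (tequiv_unfold_inst Sg h₁ (key E₁ es₁ hm₁) v₁)
      (tequiv_unfold_inst Sg h₂ (key E₂ es₂ hm₂) v₂) hstep

theorem isBisim_relC (Sg : Sig) (hSg : Contractive Sg) : IsBisim Sg (RelC Sg) := by
  intro X Y hXY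
  obtain ⟨X', Y', hX, hY, C, Γ, A, B, ρ, τ₁, τ₂, hV, d, hC, h₁, h₂, rfl, rfl⟩ := hXY
  exact stepB_transfer (hX.unfold Sg) (hY.unfold Sg) (main0 hSg d hV h₁ h₂ hC)

/-- soundness of the algorithmic type equality.  If
`V ; C ; · ⊢ A ≡ B` is derivable (with empty closure context), then
`∀V. C ⇒ A ≡ B` holds. -/
theorem algEq_sound (Sg : Sig) (hSg : Contractive Sg)
    (C : AProp) (A B : STy)
    (h : AlgEq Sg (fun _ _ => True) C [] A B) :
    EqUnder Sg C A B := by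
  intro σ hσ
  refine ⟨RelC Sg, isBisim_relC Sg hSg, RelA.relC ?_⟩
  exact ⟨C, [], A, B, σ, _, _, (by simp only [Valid]), h, hσ,
    Gd.const σ, Gd.const σ, rfl, rfl⟩
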